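/- Let (Ω,σ) be a finite measure space, let H' be a finite-dimensional vector space of real-valued square-integrable functions on Ω, and let H be the linear span of all products φ₁·φ₂ with φ₁, φ₂ ∈ H'. Let X ⊆ Ω be a finite subset and W : X → ℝ a function with W(x) > 0 for all x ∈ X. Then (X,W) is a cubature formula for H if and only if the restriction map ρ : H' → ℓ²(X,W), φ ↦ φ|_X, preserves inner products, i.e. ∑_{x∈X} W(x)φ₁(x)φ₂(x) = ∫_Ω φ₁φ₂ dσ for all φ₁,φ₂ ∈ H'. In particular, if (X,W) is a cubature formula for H and the L²(σ) inner product is positive definite on H' (no nonzero element of H' vanishes σ-almost everywhere), then |X| ≥ dim_ℝ H'. -/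

import Mathlib

open MeasureTheory Finset

lemma cubature_aux_integrable_mul {Ω : Type*} [MeasurableSpace Ω] {σ : Measure Ω}
    {f g : Ω → ℝ} (hf : MemLp f 2 σ) (hg : MemLp g 2 σ) :
    Integrable (f * g) σ := by
  have h : MemLp (f • g) 1 σ := hg.smul hf
  simpa [smul_eq_mul] using memLp_one_iff_integrable.mp h

/-- a pair `(X,W)` is a cubature formula for the span `H` of products of
elements of `H'` iff the restriction map `H' → ℓ²(X,W)` preserves inner products;
and in that case, if the `L²(σ)` inner product is positive definite on `H'`,
then `|X| ≥ dim H'`. -/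
theorem cubature_iff_isometry_and_card_lower_bound
    {Ω : Type*} [MeasurableSpace Ω] (σ : Measure Ω) [IsFiniteMeasure σ]
    (H' H : Submodule ℝ (Ω → ℝ)) [FiniteDimensional ℝ H']
    (hL2 : ∀ φ ∈ H', MemLp φ 2 σ)
    (hH : H = Submodule.span ℝ {f : Ω → ℝ | ∃ φ₁ ∈ H', ∃ φ₂ ∈ H', f = φ₁ * φ₂})
    (X : Finset Ω) (W : Ω → ℝ) (hW : ∀ x ∈ X, 0 < W x) :
    ((∀ φ ∈ H, ∑ x ∈ X, W x * φ x = ∫ ω, φ ω ∂σ) ↔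
      (∀ φ₁ ∈ H', ∀ φ₂ ∈ H',
        ∑ x ∈ X, W x * (φ₁ x * φ₂ x) = ∫ ω, φ₁ ω * φ₂ ω ∂σ)) ∧
    ((∀ φ ∈ H, ∑ x ∈ X, W x * φ x = ∫ ω, φ ω ∂σ) →
      (∀ φ ∈ H', (∀ᵐ ω ∂σ, φ ω = 0) → φ = 0) →
      Module.finrank ℝ H' ≤ X.card) := by
  have main : (∀ φ ∈ H, ∑ x ∈ X, W x * φ x = ∫ ω, φ ω ∂σ) ↔
      (∀ φ₁ ∈ H', ∀ φ₂ ∈ H',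
        ∑ x ∈ X, W x * (φ₁ x * φ₂ x) = ∫ ω, φ₁ ω * φ₂ ω ∂σ) := by
    constructor
    · intro hcub φ₁ h₁ φ₂ h₂
      have hmem : φ₁ * φ₂ ∈ H := hH ▸ Submodule.subset_span ⟨φ₁, h₁, φ₂, h₂, rfl⟩
      simpa [Pi.mul_apply] using hcub _ hmem
    · intro hiso φ hφ
      rw [hH] at hφ
      have key : Integrable φ σ ∧ ∑ x ∈ X, W x * φ x = ∫ ω, φ ω ∂σ := by
        induction hφ using Submodule.span_induction with
        | mem f hf =>
          obtain ⟨φ₁, h₁, φ₂, h₂, rfl⟩ := hf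
          exact ⟨cubature_aux_integrable_mul (hL2 _ h₁) (hL2 _ h₂),
            by simpa [Pi.mul_apply] using hiso _ h₁ _ h₂⟩
        | zero => exact ⟨integrable_zero _ _ _, by simp⟩
        | add f g hf hg ihf ihg =>
          refine ⟨ihf.1.add ihg.1, ?_⟩
          simp only [Pi.add_apply]
          rw [integral_add ihf.1 ihg.1, ← ihf.2, ← ihg.2, ← Finset.sum_add_distrib]
          exact Finset.sum_congr rfl fun x _ => by simp [mul_add]
        | smul c f hf ih =>
          refine ⟨ih.1.smul c, ?_⟩
          have : ∫ ω, (c • f) ω ∂σ = c * ∫ ω, f ω ∂σ := by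
            simp only [Pi.smul_apply]
            rw [integral_smul]
            simp [smul_eq_mul]
          rw [this, ← ih.2, Finset.mul_sum]
          exact Finset.sum_congr rfl fun x _ => by simp [smul_eq_mul]; ring
      exact key.2
  refine ⟨main, ?_⟩
  intro hcub hpos
  have hiso := main.mp hcub
  let L : H' →ₗ[ℝ] (↥X → ℝ) :=
    { toFun := fun φ x => φ.1 x
      map_add' := fun a b => rfl
      map_smul' := fun c a => rfl }
  have hinj : Function.Injective L := by
    rw [← LinearMap.ker_eq_bot, LinearMap.ker_eq_bot']
    intro φ hφ0
    have hz : ∀ x ∈ X, φ.1 x = 0 := fun x hx => congrFun hφ0 ⟨x, hx⟩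
    have h0 : ∫ ω, φ.1 ω * φ.1 ω ∂σ = 0 := by
      rw [← hiso _ φ.2 _ φ.2]
      exact Finset.sum_eq_zero fun x hx => by rw [hz x hx]; ring
    have hint : Integrable (fun ω => φ.1 ω * φ.1 ω) σ := by
      exact cubature_aux_integrable_mul (hL2 _ φ.2) (hL2 _ φ.2)
    have hae : ∀ᵐ ω ∂σ, φ.1 ω = 0 := by
      have h := (integral_eq_zero_iff_of_nonneg (fun ω => mul_self_nonneg (φ.1 ω)) hint).mp h0
      have h' : ∀ᵐ ω ∂σ, φ.1 ω * φ.1 ω = 0 := h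
      filter_upwards [h'] with ω hω using mul_self_eq_zero.mp hω
    exact Subtype.ext (hpos _ φ.2 hae)
  have hle := LinearMap.finrank_le_finrank_of_injective hinj
  rwa [Module.finrank_pi, Fintype.card_coe] at hle
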